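/- Let G be a finite group, N a normal subgroup of G, and F a field of characteristic p > 0. Then the ideal F[G]·J(F[N]) of the group algebra F[G] generated by the Jacobson radical of F[N] is a nilpotent two-sided ideal of F[G]; in particular F[G]·J(F[N]) ⊆ J(F[G]). -/

import Mathlib

open MonoidAlgebra


/-- Noncommutative Nakayama-style induction: if `J` is a left ideal closed under right
multiplication such that `1 - j` is left-invertible for `j ∈ J`, and a finitely generated
left ideal `span A s` satisfies `span A s ≤ J · span A s`, then `span A s = ⊥`. -/
theorem nak_aux {A : Type} [Ring A] (J : Ideal A)
    (hJr : ∀ x y : A, x ∈ J → x * y ∈ J)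
    (hJinv : ∀ j ∈ J, ∃ z : A, z * (1 - j) = 1) :
    ∀ (k : ℕ) (s : Finset A), s.card ≤ k →
      Submodule.span A (↑s : Set A) ≤
        Submodule.span A {x | ∃ j ∈ J, ∃ v ∈ Submodule.span A (↑s : Set A), x = j * v} →
      Submodule.span A (↑s : Set A) = ⊥ := by
  intro k
  induction k with
  | zero =>
    intro s hs _
    rw [Finset.card_eq_zero.mp (Nat.le_zero.mp hs)]
    simp
  | succ k ih =>
    intro s hcard hle
    classical
    rcases Finset.eq_empty_or_nonempty s with rfl | ⟨x0, hx0⟩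
    · simp
    set s' := s.erase x0 with hs'
    have hJP_le : ∀ t : Set A,
        Submodule.span A {x | ∃ j ∈ J, ∃ v ∈ Submodule.span A t, x = j * v} ≤
          Submodule.span A t := by
      intro t
      rw [Submodule.span_le]
      rintro x ⟨j, hj, v, hv, rfl⟩
      exact Ideal.mul_mem_left _ j hv
    have hsup : Submodule.span A (↑s : Set A) =
        Submodule.span A {x0} ⊔ Submodule.span A (↑s' : Set A) := by
      rw [← Submodule.span_insert, ← Finset.coe_insert, Finset.insert_erase hx0]
    have hx0mem : x0 ∈ Submodule.span A
        {x | ∃ j ∈ J, ∃ v ∈ Submodule.span A (↑s : Set A), x = j * v} :=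
      hle (Submodule.subset_span hx0)
    have hdecomp : ∃ j ∈ J, ∃ w ∈ Submodule.span A
        {x | ∃ j ∈ J, ∃ v ∈ Submodule.span A (↑s' : Set A), x = j * v}, x0 = j * x0 + w := by
      refine Submodule.span_induction
        (p := fun y _ => ∃ j ∈ J, ∃ w ∈ Submodule.span A
          {x | ∃ j ∈ J, ∃ v ∈ Submodule.span A (↑s' : Set A), x = j * v}, y = j * x0 + w)
        ?_ ?_ ?_ ?_ hx0mem
      · rintro x ⟨j, hj, v, hv, rfl⟩
        rw [hsup] at hv
        obtain ⟨v1, hv1, v2, hv2, rfl⟩ := Submodule.mem_sup.1 hv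
        obtain ⟨r, rfl⟩ := Submodule.mem_span_singleton.1 hv1
        refine ⟨j * r, hJr j r hj, j * v2,
          Submodule.subset_span ⟨j, hj, v2, hv2, rfl⟩, ?_⟩
        rw [smul_eq_mul, mul_add, mul_assoc]
      · exact ⟨0, J.zero_mem, 0, Submodule.zero_mem _, by simp⟩
      · rintro x y _ _ ⟨j1, hj1, w1, hw1, rfl⟩ ⟨j2, hj2, w2, hw2, rfl⟩
        refine ⟨j1 + j2, J.add_mem hj1 hj2, w1 + w2, Submodule.add_mem _ hw1 hw2, ?_⟩
        rw [add_mul]; abel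
      · rintro r x _ ⟨j, hj, w, hw, rfl⟩
        refine ⟨r * j, J.mul_mem_left r hj, r • w, Submodule.smul_mem _ r hw, ?_⟩
        rw [smul_add, smul_eq_mul, smul_eq_mul, mul_assoc]
    obtain ⟨j, hj, w, hw, hEq⟩ := hdecomp
    obtain ⟨z, hz⟩ := hJinv j hj
    have h1 : (1 - j) * x0 = w := by
      rw [sub_mul, one_mul]
      exact sub_eq_iff_eq_add.mpr (hEq.trans (add_comm _ _))
    have hx0w : x0 = z * w := by
      calc x0 = 1 * x0 := (one_mul x0).symm
        _ = z * (1 - j) * x0 := by rw [hz]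
        _ = z * ((1 - j) * x0) := by rw [mul_assoc]
        _ = z * w := by rw [h1]
    have hx0' : x0 ∈ Submodule.span A (↑s' : Set A) :=
      hJP_le _ (by rw [hx0w]; exact Ideal.mul_mem_left _ z hw)
    have hss' : Submodule.span A (↑s : Set A) = Submodule.span A (↑s' : Set A) := by
      rw [hsup]
      exact sup_eq_right.mpr ((Submodule.span_singleton_le_iff_mem _ _).mpr hx0')
    have hcard' : s'.card ≤ k := by
      have h : s'.card = s.card - 1 := by rw [hs']; exact Finset.card_erase_of_mem hx0
      have h2 : 0 < s.card := Finset.card_pos.mpr ⟨x0, hx0⟩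
      omega
    rw [hss']
    refine ih s' hcard' ?_
    rw [← hss']
    exact hle

/-- The Jacobson radical of a finite-dimensional algebra over a field is nilpotent
(noncommutative version, phrased with `F`-submodule powers). -/
theorem jac_nilpotent_aux (F : Type) [Field F] (A : Type) [Ring A] [Algebra F A]
    [Module.Finite F A] :
    ∃ n : ℕ, 0 < n ∧
      ((Ideal.jacobson (⊥ : Ideal A)).restrictScalars F) ^ n = (⊥ : Submodule F A) := by
  classical
  set J : Ideal A := Ideal.jacobson (⊥ : Ideal A) with hJ
  set JF : Submodule F A := J.restrictScalars F with hJF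
  have hmemJF : ∀ x : A, x ∈ JF ↔ x ∈ J := fun x => Iff.rfl
  have hJr : ∀ x y : A, x ∈ J → x * y ∈ J := by
    intro x y hx
    exact J.mul_mem_right y hx
  -- JF * JF ≤ JF
  have hmul : JF * JF ≤ JF := Submodule.mul_le.2 fun x hx y _ => hJr x y hx
  -- the powers JF^(m+1) are decreasing
  have hanti : ∀ m : ℕ, JF ^ (m + 2) ≤ JF ^ (m + 1) := by
    intro m
    induction m with
    | zero => simpa [pow_succ, pow_one] using hmul
    | succ m ih =>
      calc JF ^ (m + 3) = JF ^ (m + 2) * JF := pow_succ _ _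
        _ ≤ JF ^ (m + 1) * JF := mul_le_mul_left ih _
        _ = JF ^ (m + 2) := (pow_succ _ _).symm
  have hanti' : ∀ a b : ℕ, a ≤ b → JF ^ (b + 1) ≤ JF ^ (a + 1) := by
    intro a b hab
    induction b, hab using Nat.le_induction with
    | base => exact le_rfl
    | succ b hb ih => exact (hanti b).trans ih
  -- stabilization
  obtain ⟨n, hn⟩ := IsArtinian.monotone_stabilizes
    (⟨fun m => OrderDual.toDual (JF ^ (m + 1)),
      fun {a b} hab => hanti' a b hab⟩ : ℕ →o (Submodule F A)ᵒᵈ)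
  have hstab : JF ^ (n + 1) = JF ^ (n + 2) :=
    congrArg OrderDual.ofDual (hn (n + 1) (Nat.le_succ n))
  set W : Submodule F A := JF ^ (n + 1) with hW
  -- powers of JF are stable under left multiplication
  have hWl : ∀ (m : ℕ) (r x : A), x ∈ JF ^ (m + 1) → r * x ∈ JF ^ (m + 1) := by
    intro m
    induction m with
    | zero =>
      intro r x hx
      rw [pow_one] at hx ⊢
      exact J.mul_mem_left r hx
    | succ m _ =>
      intro r x hx
      rw [pow_succ'] at hx ⊢
      refine Submodule.mul_induction_on (C := fun y => r * y ∈ JF * JF ^ (m + 1)) hx ?_ ?_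
      · intro a ha b hb
        rw [← mul_assoc]
        exact Submodule.mul_mem_mul (J.mul_mem_left r ha) hb
      · intro a b ha hb
        rw [mul_add]
        exact Submodule.add_mem _ ha hb
  -- W as a left ideal
  set Wid : Ideal A :=
    { carrier := (W : Set A)
      add_mem' := fun h1 h2 => W.add_mem h1 h2
      zero_mem' := W.zero_mem
      smul_mem' := fun r x hx => by
        simpa [smul_eq_mul] using hWl n r x hx } with hWid
  have hmemWid : ∀ x : A, x ∈ Wid ↔ x ∈ W := fun x => Iff.rfl
  -- W is finitely generated as an F-module
  obtain ⟨S, hS⟩ := (IsNoetherian.noetherian W : W.FG)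
  have hspan : Submodule.span A (↑S : Set A) = Wid := by
    apply le_antisymm
    · rw [Submodule.span_le]
      intro x hx
      have hx' : x ∈ Submodule.span F (↑S : Set A) := Submodule.subset_span hx
      rw [hS] at hx'
      exact hx'
    · intro x hx
      have hx' : x ∈ Submodule.span F (↑S : Set A) := by rw [hS]; exact hx
      exact Submodule.span_le_restrictScalars F A (↑S : Set A) hx'
  -- Nakayama hypothesis
  have hNakHyp : Submodule.span A (↑S : Set A) ≤
      Submodule.span A {x | ∃ j ∈ J, ∃ v ∈ Submodule.span A (↑S : Set A), x = j * v} := by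
    intro x hx
    have hxW : x ∈ W := (hmemWid x).mp (by rw [← hspan]; exact hx)
    have hx2 : x ∈ JF * JF ^ (n + 1) := by
      have hx3 : x ∈ JF ^ (n + 2) := by rw [← hstab]; exact hxW
      rwa [pow_succ'] at hx3
    refine Submodule.mul_induction_on
      (C := fun y => y ∈ Submodule.span A
        {x | ∃ j ∈ J, ∃ v ∈ Submodule.span A (↑S : Set A), x = j * v}) hx2 ?_ ?_
    · intro a ha b hb
      exact Submodule.subset_span ⟨a, ha, b, by rw [hspan]; exact hb, rfl⟩
    · intro a b ha hb
      exact Submodule.add_mem _ ha hb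
  -- invertibility of 1 - j
  have hJinv : ∀ j ∈ J, ∃ z : A, z * (1 - j) = 1 := by
    intro j hj
    obtain ⟨z, hz⟩ := Ideal.exists_mul_sub_mem_of_sub_one_mem_jacobson (1 - j)
      (by simpa using J.neg_mem hj)
    rw [Ideal.mem_bot, sub_eq_zero] at hz
    exact ⟨z, hz⟩
  have hbot : Submodule.span A (↑S : Set A) = ⊥ :=
    nak_aux J hJr hJinv S.card S le_rfl hNakHyp
  refine ⟨n + 1, Nat.succ_pos n, ?_⟩
  apply le_antisymm _ bot_le
  intro x hx
  have hx' : x ∈ Wid := hx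
  rw [← hspan, hbot] at hx'
  simpa using hx'


theorem main_aux (F : Type) [Field F] (G : Type) [Group G] [Fintype G]
    (N : Subgroup G) (hN : N.Normal) (K : Submodule F (MonoidAlgebra F G))
    (hK : K = Submodule.span F {x : MonoidAlgebra F G |
      ∃ a : MonoidAlgebra F G, ∃ j ∈
        (⇑(MonoidAlgebra.mapDomainAlgHom F F N.subtype) ''
          ((⊥ : Ideal (MonoidAlgebra F ↥N)).jacobson : Set (MonoidAlgebra F ↥N))),
        x = a * j}) :
    (∀ x ∈ K, ∀ r : MonoidAlgebra F G, r * x ∈ K ∧ x * r ∈ K) ∧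
    (∃ n : ℕ, 0 < n ∧ K ^ n = ⊥) ∧
    (K : Set (MonoidAlgebra F G)) ⊆
      ((⊥ : Ideal (MonoidAlgebra F G)).jacobson : Set (MonoidAlgebra F G)) := by
  classical
  haveI := hN
  haveI : Module.Finite F (MonoidAlgebra F ↥N) :=
    Module.Finite.equiv (MonoidAlgebra.coeffLinearEquiv F).symm
  set J : Ideal (MonoidAlgebra F ↥N) := (⊥ : Ideal (MonoidAlgebra F ↥N)).jacobson with hJdef
  set ι : MonoidAlgebra F ↥N →ₐ[F] MonoidAlgebra F G :=
    MonoidAlgebra.mapDomainAlgHom F F N.subtype with hιdef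
  set Q : ℕ → Submodule F (MonoidAlgebra F G) := fun m =>
    Submodule.span F {x : MonoidAlgebra F G |
      ∃ a : MonoidAlgebra F G, ∃ j ∈ (J.restrictScalars F) ^ m, x = a * ι j} with hQdef
  -- K = Q 1
  have hKQ : K = Q 1 := by
    rw [hK]
    show _ = Submodule.span F {x : MonoidAlgebra F G |
      ∃ a : MonoidAlgebra F G, ∃ j ∈ (J.restrictScalars F) ^ 1, x = a * ι j}
    congr 1
    ext x
    constructor
    · rintro ⟨a, j, ⟨j', hj', rfl⟩, rfl⟩
      exact ⟨a, j', by simpa [pow_one] using hj', rfl⟩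
    · rintro ⟨a, j', hj', rfl⟩
      exact ⟨a, ι j', ⟨j', by simpa [pow_one] using hj', rfl⟩, rfl⟩
  -- conjugation invariance of J
  have hσJ : ∀ (g : G) (j : MonoidAlgebra F ↥N), j ∈ J →
      MonoidAlgebra.domCongr F F (MulAut.conjNormal g : ↥N ≃* ↥N) j ∈ J := by
    intro g j hj
    have hmap := Ideal.map_jacobson_of_bijective
      (f := ((MonoidAlgebra.domCongr F F (MulAut.conjNormal g : ↥N ≃* ↥N)).toRingEquiv :
          MonoidAlgebra F ↥N ≃+* MonoidAlgebra F ↥N).toRingHom)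
      ((MonoidAlgebra.domCongr F F (MulAut.conjNormal g : ↥N ≃* ↥N)).toRingEquiv.bijective)
      (I := (⊥ : Ideal (MonoidAlgebra F ↥N)))
    rw [Ideal.map_bot] at hmap
    rw [hJdef, ← hmap]
    exact Ideal.mem_map_of_mem _ hj
  -- commutation of ι j with group elements
  have hcomm : ∀ (g : G) (j : MonoidAlgebra F ↥N),
      ι j * MonoidAlgebra.single g (1 : F) =
        MonoidAlgebra.single g (1 : F) *
          ι (MonoidAlgebra.domCongr F F (MulAut.conjNormal g⁻¹ : ↥N ≃* ↥N) j) := by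
    intro g j
    induction j using MonoidAlgebra.induction_linear with
    | zero => simp
    | add f1 f2 h1 h2 => simp only [map_add, add_mul, mul_add, h1, h2]
    | single n c =>
      rw [MonoidAlgebra.domCongr_single]
      rw [show ι (MonoidAlgebra.single n c)
          = MonoidAlgebra.single (↑n : G) c by
        rw [hιdef]; simp [MonoidAlgebra.mapDomainAlgHom_apply]]
      rw [show ι (MonoidAlgebra.single ((MulAut.conjNormal g⁻¹ : MulAut ↥N) n) c)
          = MonoidAlgebra.single ((((MulAut.conjNormal g⁻¹ : MulAut ↥N) n) : ↥N) : G) c by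
        rw [hιdef]; simp [MonoidAlgebra.mapDomainAlgHom_apply]]
      rw [MonoidAlgebra.single_mul_single, MonoidAlgebra.single_mul_single]
      have hc : ((((MulAut.conjNormal g⁻¹ : MulAut ↥N) n) : ↥N) : G) = g⁻¹ * ↑n * g := by
        rw [MulAut.conjNormal_apply]; group
      rw [hc]
      congr 1
      · group
      · rw [mul_one, one_mul]
  -- swap lemma
  have hswap : ∀ j ∈ J, ∀ b : MonoidAlgebra F G, ι j * b ∈ Q 1 := by
    intro j hj b
    induction b using MonoidAlgebra.induction_linear with
    | zero => rw [mul_zero]; exact (Q 1).zero_mem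
    | add f1 f2 h1 h2 => rw [mul_add]; exact (Q 1).add_mem h1 h2
    | single g c =>
      have h1 : ι j * MonoidAlgebra.single g c =
          c • (MonoidAlgebra.single g (1 : F) *
            ι (MonoidAlgebra.domCongr F F (MulAut.conjNormal g⁻¹ : ↥N ≃* ↥N) j)) := by
        calc ι j * MonoidAlgebra.single g c
            = ι j * (c • MonoidAlgebra.single g (1 : F)) := by
              rw [MonoidAlgebra.smul_single, smul_eq_mul, mul_one]
          _ = c • (ι j * MonoidAlgebra.single g (1 : F)) := mul_smul_comm c _ _
          _ = _ := by rw [hcomm g j]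
      rw [h1]
      refine Submodule.smul_mem _ c (Submodule.subset_span ?_)
      exact ⟨MonoidAlgebra.single g (1 : F),
        MonoidAlgebra.domCongr F F (MulAut.conjNormal g⁻¹ : ↥N ≃* ↥N) j,
        by simpa [pow_one] using hσJ g⁻¹ j hj, rfl⟩
  -- left multiplication stability
  have hleft : ∀ (m : ℕ) (r : MonoidAlgebra F G), ∀ x ∈ Q m, r * x ∈ Q m := by
    intro m r x hx
    refine Submodule.span_induction (p := fun y _ => r * y ∈ Q m) ?_ ?_ ?_ ?_ hx
    · rintro y ⟨a, j, hj, rfl⟩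
      exact Submodule.subset_span ⟨r * a, j, hj, by rw [mul_assoc]⟩
    · simp only [mul_zero]; exact Submodule.zero_mem _
    · intro y z _ _ hy hz
      simp only [mul_add]; exact Submodule.add_mem _ hy hz
    · intro c y _ hy
      simp only [mul_smul_comm]; exact Submodule.smul_mem _ c hy
  -- right multiplication maps Q 1 into Q 1
  have hright : ∀ x ∈ Q 1, ∀ r : MonoidAlgebra F G, x * r ∈ Q 1 := by
    intro x hx r
    refine Submodule.span_induction (p := fun y _ => y * r ∈ Q 1) ?_ ?_ ?_ ?_ hx
    · rintro y ⟨a, j, hj, rfl⟩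
      have hj1 : j ∈ J := by
        have := hj; rwa [pow_one] at this
      rw [mul_assoc]
      exact hleft 1 a _ (hswap j hj1 r)
    · simp only [zero_mul]; exact Submodule.zero_mem _
    · intro y z _ _ hy hz
      simp only [add_mul]; exact Submodule.add_mem _ hy hz
    · intro c y _ hy
      simp only [smul_mul_assoc]; exact Submodule.smul_mem _ c hy
  -- Q 1 * Q m ≤ Q (m + 1)
  have hQmul : ∀ (m : ℕ), ∀ x ∈ Q 1, ∀ y ∈ Q m, x * y ∈ Q (m + 1) := by
    intro m x hx
    refine Submodule.span_induction (p := fun x _ => ∀ y ∈ Q m, x * y ∈ Q (m + 1)) ?_ ?_ ?_ ?_ hx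
    · rintro x ⟨a, j, hj, rfl⟩ y hy
      have hj1 : j ∈ J := by have := hj; rwa [pow_one] at this
      refine Submodule.span_induction (p := fun y _ => (a * ι j) * y ∈ Q (m + 1)) ?_ ?_ ?_ ?_ hy
      · rintro y ⟨b, j2, hj2, rfl⟩
        have hsw : ι j * b ∈ Q 1 := hswap j hj1 b
        have hthird : ∀ z ∈ Q 1, a * z * ι j2 ∈ Q (m + 1) := by
          intro z hz
          refine Submodule.span_induction (p := fun z _ => a * z * ι j2 ∈ Q (m + 1)) ?_ ?_ ?_ ?_ hz
          · rintro z ⟨a', j', hj', rfl⟩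
            have hj'1 : j' ∈ J := by have := hj'; rwa [pow_one] at this
            refine Submodule.subset_span ⟨a * a', j' * j2, ?_, by
              simp only [map_mul, mul_assoc]⟩
            rw [pow_succ']
            exact Submodule.mul_mem_mul hj'1 hj2
          · simp only [mul_zero, zero_mul]; exact Submodule.zero_mem _
          · intro z w _ _ hz hw
            simp only [mul_add, add_mul]; exact Submodule.add_mem _ hz hw
          · intro c z _ hz
            simp only [mul_smul_comm, smul_mul_assoc]; exact Submodule.smul_mem _ c hz
        have heq : (a * ι j) * (b * ι j2) = a * (ι j * b) * ι j2 := by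
          simp only [mul_assoc]
        rw [heq]
        exact hthird _ hsw
      · simp only [mul_zero]; exact Submodule.zero_mem _
      · intro y z _ _ hy hz
        simp only [mul_add]; exact Submodule.add_mem _ hy hz
      · intro c y _ hy
        simp only [mul_smul_comm]; exact Submodule.smul_mem _ c hy
    · intro y hy; simp only [zero_mul]; exact Submodule.zero_mem _
    · intro x z _ _ hx hz y hy
      simp only [add_mul]; exact Submodule.add_mem _ (hx y hy) (hz y hy)
    · intro c x _ hx y hy
      simp only [smul_mul_assoc]; exact Submodule.smul_mem _ c (hx y hy)
  -- K ^ m ≤ Q m for m ≥ 1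
  have hpow : ∀ m : ℕ, 1 ≤ m → K ^ m ≤ Q m := by
    intro m hm
    induction m, hm using Nat.le_induction with
    | base => rw [pow_one, hKQ]
    | succ m hm ih =>
      rw [pow_succ']
      refine Submodule.mul_le.2 fun x hx y hy => ?_
      exact hQmul m x (by rw [← hKQ]; exact hx) y (ih hy)
  -- nilpotency
  obtain ⟨n0, hn0pos, hn0⟩ := jac_nilpotent_aux F (MonoidAlgebra F ↥N)
  have hQbot : Q n0 ≤ ⊥ := by
    refine Submodule.span_le.2 ?_
    rintro x ⟨a, j, hj, rfl⟩
    rw [show ((⊥ : Ideal (MonoidAlgebra F ↥N)).jacobson.restrictScalars F) ^ n0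
        = (⊥ : Submodule F (MonoidAlgebra F ↥N)) from hn0] at hj
    rw [Submodule.mem_bot] at hj
    subst hj
    simp
  have hKpow : K ^ n0 = ⊥ := le_antisymm ((hpow n0 hn0pos).trans hQbot) bot_le
  -- the ideal with carrier K
  have hKleft : ∀ (r : MonoidAlgebra F G), ∀ x ∈ K, r * x ∈ K := by
    intro r x hx
    rw [hKQ] at hx ⊢
    exact hleft 1 r x hx
  set Kid : Ideal (MonoidAlgebra F G) :=
    { carrier := (K : Set (MonoidAlgebra F G))
      add_mem' := fun h1 h2 => K.add_mem h1 h2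
      zero_mem' := K.zero_mem
      smul_mem' := fun r x hx => by
        simpa [smul_eq_mul] using hKleft r x hx } with hKiddef
  have hmemKid : ∀ x : MonoidAlgebra F G, x ∈ Kid ↔ x ∈ K := fun x => Iff.rfl
  -- K is contained in every maximal ideal
  have hKM : ∀ M : Ideal (MonoidAlgebra F G), M.IsMaximal →
      (K : Set (MonoidAlgebra F G)) ⊆ (M : Set (MonoidAlgebra F G)) := by
    intro M hM
    by_contra hc
    rw [Set.not_subset] at hc
    obtain ⟨k0, hk0K, hk0M⟩ := hc
    have hlt : M < M ⊔ Kid := by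
      rw [SetLike.lt_iff_le_and_exists]
      exact ⟨le_sup_left, ⟨k0, Submodule.mem_sup_right ((hmemKid k0).mpr hk0K), hk0M⟩⟩
    have htop : M ⊔ Kid = ⊤ := (Ideal.isMaximal_def.mp hM).2 _ hlt
    have h1 : (1 : MonoidAlgebra F G) ∈ M ⊔ Kid := by rw [htop]; exact Submodule.mem_top
    obtain ⟨m, hm, k, hk, hmk⟩ := Submodule.mem_sup.1 h1
    have hkK : k ∈ K := (hmemKid k).mp hk
    have hknil : IsNilpotent k := by
      refine ⟨n0, ?_⟩
      have hpk : k ^ n0 ∈ K ^ n0 := K.pow_mem_pow hkK n0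
      rw [hKpow] at hpk
      simpa using hpk
    have hmu : IsUnit m := by
      have hm1 : m = 1 - k := eq_sub_of_add_eq hmk
      rw [hm1]
      exact hknil.isUnit_one_sub
    exact hM.ne_top (M.eq_top_of_isUnit_mem hm hmu)
  refine ⟨?_, ⟨n0, hn0pos, hKpow⟩, ?_⟩
  · intro x hx r
    constructor
    · exact hKleft r x hx
    · rw [hKQ] at hx ⊢
      exact hright x hx r
  · intro x hx
    refine Ideal.mem_sInf.mpr ?_
    rintro M ⟨-, hM⟩
    exact hKM M hM hx

/-- Let `G` be a finite group, `N ⊴ G`, `F` a field of characteristic `p > 0`.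
Then the ideal `F[G]·J(F[N])` of `F[G]` generated by the Jacobson radical of `F[N]`
(viewed inside `F[G]` via the inclusion `N ≤ G`) is a nilpotent two-sided ideal of `F[G]`;
in particular it is contained in `J(F[G])`. -/
theorem fg_jacobson_of_normal_subgroup_nilpotent
    (F : Type) [Field F] (p : ℕ) (hp : 0 < p) (hchar : CharP F p)
    (G : Type) [Group G] [Fintype G] (N : Subgroup G) (hN : N.Normal) :
    -- the inclusion F[N] → F[G]
    let ι : MonoidAlgebra F N →ₐ[F] MonoidAlgebra F G :=
      MonoidAlgebra.mapDomainAlgHom F F N.subtype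
    -- J(F[N]) viewed as a subset of F[G]
    let Jset : Set (MonoidAlgebra F G) :=
      ι '' ((⊥ : Ideal (MonoidAlgebra F N)).jacobson : Set (MonoidAlgebra F N))
    -- the ideal F[G]·J(F[N]) of F[G]
    let K : Submodule F (MonoidAlgebra F G) :=
      Submodule.span F {x : MonoidAlgebra F G | ∃ a : MonoidAlgebra F G, ∃ j ∈ Jset, x = a * j}
    -- K is a two-sided ideal
    (∀ x ∈ K, ∀ r : MonoidAlgebra F G, r * x ∈ K ∧ x * r ∈ K) ∧
    -- K is nilpotent
    (∃ n : ℕ, 0 < n ∧ K ^ n = ⊥) ∧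
    -- in particular K ⊆ J(F[G])
    (K : Set (MonoidAlgebra F G)) ⊆
      ((⊥ : Ideal (MonoidAlgebra F G)).jacobson : Set (MonoidAlgebra F G)) := by
  intro ι Jset K
  exact main_aux F G N hN K rfl
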